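/- Let X be an infinite-dimensional complex Hilbert space, let T be a compact operator on X with decreasingly ordered singular values (s_k(T)), and let (e_k) be any orthonormal system in X. Then for every n ∈ ℕ, Σ_{k=1}^n |⟨e_k, T e_k⟩| ≤ Σ_{k=1}^n s_k(T). -/

import Mathlib

open scoped ComplexInnerProductSpace ENNReal
open Filter

noncomputable section

universe u v

noncomputable def sv {X : Type u} {Y : Type v} [NormedAddCommGroup X] [InnerProductSpace ℂ X]
    [NormedAddCommGroup Y] [InnerProductSpace ℂ Y] (C : X →L[ℂ] Y) (n : ℕ) : ℝ :=
  ⨅ F : {F : X →L[ℂ] Y // Module.rank ℂ (LinearMap.range (F : X →ₗ[ℂ] Y)) ≤ n},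
    ‖C - (F : X →L[ℂ] Y)‖

def MemSchatten {X : Type u} {Y : Type v} [NormedAddCommGroup X] [InnerProductSpace ℂ X]
    [NormedAddCommGroup Y] [InnerProductSpace ℂ Y] (p : ℝ≥0∞) (C : X →L[ℂ] Y) : Prop :=
  IsCompactOperator C ∧ (p ≠ ∞ → Summable (fun n => sv C n ^ p.toReal))

noncomputable def schattenNorm {X : Type u} {Y : Type v} [NormedAddCommGroup X]
    [InnerProductSpace ℂ X] [NormedAddCommGroup Y] [InnerProductSpace ℂ Y]
    (p : ℝ≥0∞) (C : X →L[ℂ] Y) : ℝ :=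
  if p = ∞ then ‖C‖ else (∑' n, sv C n ^ p.toReal) ^ (1 / p.toReal)

def IsTraceOf {Y : Type v} [NormedAddCommGroup Y] [InnerProductSpace ℂ Y] [CompleteSpace Y]
    (A : Y →L[ℂ] Y) (z : ℂ) : Prop :=
  ∀ (ι : Type v) (b : HilbertBasis ι ℂ Y), HasSum (fun i => ⟪b i, A (b i)⟫) z

section Aux

set_option linter.unusedSectionVars false
set_option maxHeartbeats 1000000

open Metric

variable {X : Type u} [NormedAddCommGroup X] [InnerProductSpace ℂ X] [CompleteSpace X]

lemma sv_nonneg' (C : X →L[ℂ] X) (n : ℕ) : 0 ≤ sv C n :=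
  Real.iInf_nonneg (fun _ => norm_nonneg _)

lemma sv_bddBelow' (C : X →L[ℂ] X) (n : ℕ) :
    BddBelow (Set.range fun F : {F : X →L[ℂ] X // Module.rank ℂ (LinearMap.range (F : X →ₗ[ℂ] X)) ≤ n} => ‖C - (F : X →L[ℂ] X)‖) := by
  refine ⟨0, fun x hx => ?_⟩
  obtain ⟨i, rfl⟩ := hx
  exact norm_nonneg _

lemma sv_le' (C G : X →L[ℂ] X) (n : ℕ)
    (h : Module.rank ℂ (LinearMap.range (G : X →ₗ[ℂ] X)) ≤ n) : sv C n ≤ ‖C - G‖ :=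
  ciInf_le (sv_bddBelow' C n) (⟨G, h⟩ : {F : X →L[ℂ] X // Module.rank ℂ (LinearMap.range (F : X →ₗ[ℂ] X)) ≤ n})

lemma sv_le_add' (C F : X →L[ℂ] X) (n : ℕ) : sv F n ≤ sv C n + ‖F - C‖ := by
  have hne : Nonempty {G : X →L[ℂ] X // Module.rank ℂ (LinearMap.range ((G : X →L[ℂ] X) : X →ₗ[ℂ] X)) ≤ n} :=
    ⟨⟨0, by simp⟩⟩
  have : sv C n + ‖F - C‖ = ⨅ G : {G : X →L[ℂ] X // Module.rank ℂ (LinearMap.range ((G : X →L[ℂ] X) : X →ₗ[ℂ] X)) ≤ n}, (‖C - (G : X →L[ℂ] X)‖ + ‖F - C‖) :=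
    by rw [sv]; exact (ciInf_add (sv_bddBelow' C n) _)
  rw [this]
  refine le_ciInf fun G => ?_
  calc sv F n ≤ ‖F - G‖ := sv_le' F G n G.2
    _ ≤ ‖F - C‖ + ‖C - G‖ := norm_sub_le_norm_sub_add_norm_sub F C (G : X →L[ℂ] X)
    _ = ‖C - ↑G‖ + ‖F - C‖ := add_comm _ _
lemma exists_finiteRank_approx (T : X →L[ℂ] X) (hT : IsCompactOperator T) {ε : ℝ} (hε : 0 < ε) :
    ∃ F : X →L[ℂ] X, FiniteDimensional ℂ (LinearMap.range (F : X →ₗ[ℂ] X)) ∧ ‖T - F‖ ≤ ε := by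
  obtain ⟨K, hK, hTK⟩ := hT.image_closedBall_subset_compact 1
  obtain ⟨t, htfin, htcover⟩ := (Metric.totallyBounded_iff.mp hK.totallyBounded) ε hε
  set V : Submodule ℂ X := Submodule.span ℂ t with hV
  haveI : FiniteDimensional ℂ V := FiniteDimensional.span_of_finite ℂ htfin
  haveI : CompleteSpace V := FiniteDimensional.complete ℂ V
  set F : X →L[ℂ] X := V.subtypeL.comp ((V.orthogonalProjectionOnto).comp T) with hF
  refine ⟨F, ?_, ?_⟩
  · have hle : LinearMap.range (F : X →ₗ[ℂ] X) ≤ V := by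
      rintro y ⟨x, rfl⟩
      exact (V.orthogonalProjectionOnto (T x)).2
    exact Submodule.finiteDimensional_of_le hle
  · -- key: for ‖x‖ ≤ 1, ‖T x - F x‖ ≤ ε
    have key : ∀ x : X, ‖x‖ ≤ 1 → ‖T x - F x‖ ≤ ε := by
      intro x hx
      have hTx : T x ∈ K := hTK ⟨x, by simpa using hx, rfl⟩
      obtain ⟨c, hc, hdist⟩ : ∃ c ∈ t, T x ∈ ball c ε := by
        simpa using htcover hTx
      have hcV : c ∈ V := Submodule.subset_span hc
      have hmin : ‖T x - F x‖ ≤ ‖T x - c‖ := by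
        have := Submodule.starProjection_minimal (U := V) (T x)
        have h2 : (⨅ w : V, ‖T x - (w : X)‖) ≤ ‖T x - c‖ :=
          ciInf_le ⟨0, fun r ⟨i, hi⟩ => hi ▸ norm_nonneg _⟩ (⟨c, hcV⟩ : V)
        have h3 : F x = V.starProjection (T x) := rfl
        rw [h3, this]; exact h2
      calc ‖T x - F x‖ ≤ ‖T x - c‖ := hmin
        _ ≤ ε := by have := mem_ball.mp hdist; rw [dist_eq_norm] at this; linarith
    refine ContinuousLinearMap.opNorm_le_bound _ hε.le fun x => ?_
    rcases eq_or_ne x 0 with rfl | hx0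
    · simp
    · have hn : 0 < ‖x‖ := norm_pos_iff.mpr hx0
      have hu : ‖(‖x‖⁻¹ : ℝ) • x‖ ≤ 1 := by
        rw [norm_smul]; simp [abs_of_pos hn, inv_mul_cancel₀ hn.ne']
      have := key ((‖x‖⁻¹ : ℝ) • x) hu
      have heq : (T - F) x = ‖x‖ • ((T ((‖x‖⁻¹:ℝ) • x)) - F ((‖x‖⁻¹:ℝ) • x)) := by
        simp [map_smul, smul_sub, smul_smul, mul_inv_cancel₀ hn.ne']
      calc ‖(T - F) x‖ = ‖x‖ * ‖T ((‖x‖⁻¹:ℝ) • x) - F ((‖x‖⁻¹:ℝ) • x)‖ := by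
            rw [heq, norm_smul, Real.norm_of_nonneg hn.le]
        _ ≤ ‖x‖ * ε := by nlinarith
        _ = ε * ‖x‖ := mul_comm _ _

lemma svd_raw (F : X →L[ℂ] X) (hF : FiniteDimensional ℂ (LinearMap.range (F : X →ₗ[ℂ] X))) :
    ∃ (m : ℕ) (w : Fin m → X), Orthonormal ℂ w ∧
      (∀ i j, i ≠ j → (⟪F (w i), F (w j)⟫ : ℂ) = 0) ∧
      (∀ x, F x = ∑ i, (⟪w i, x⟫ : ℂ) • F (w i)) := by
  classical
  set K : Submodule ℂ X := LinearMap.ker (F : X →ₗ[ℂ] X) with hKdef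
  have hKclosed : IsClosed (K : Set X) := ContinuousLinearMap.isClosed_ker F
  haveI : CompleteSpace K := hKclosed.completeSpace_coe
  set W : Submodule ℂ X := Kᗮ with hWdef
  have hWfd : FiniteDimensional ℂ W := by
    have hinj : Function.Injective ((F : X →ₗ[ℂ] X).rangeRestrict.comp W.subtype) := by
      intro a b hab
      have h1 : F (a : X) = F (b : X) := congrArg Subtype.val hab
      have h2 : (a : X) - (b : X) ∈ K := by
        simp only [hKdef, LinearMap.mem_ker, map_sub, ContinuousLinearMap.coe_coe]
        rw [h1, sub_self]
      have h3 : (a : X) - (b : X) ∈ W := W.sub_mem a.2 b.2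
      have h4 : (a : X) - (b : X) = 0 := by
        simpa using (Submodule.orthogonal_disjoint K).le_bot (Submodule.mem_inf.mpr ⟨h2, h3⟩)
      exact Subtype.ext (sub_eq_zero.mp h4)
    exact FiniteDimensional.of_injective _ hinj
  haveI := hWfd
  set A := ContinuousLinearMap.adjoint F with hA
  set G : W →ₗ[ℂ] W :=
    ((W.orthogonalProjectionOnto).toLinearMap.comp ((A.comp F : X →L[ℂ] X) : X →ₗ[ℂ] X)).comp W.subtype with hG
  have hGinner : ∀ a b : W, (⟪G a, b⟫ : ℂ) = ⟪F (a : X), F (b : X)⟫ := by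
    intro a b
    have h1 : (⟪G a, b⟫ : ℂ) = ⟪W.orthogonalProjectionOnto (A (F (a:X))), b⟫ := rfl
    rw [h1, Submodule.inner_orthogonalProjectionOnto_eq_of_mem_right]
    exact ContinuousLinearMap.adjoint_inner_left F _ _
  have hGsym : G.IsSymmetric := by
    intro a b
    have h1 : (⟪a, G b⟫ : ℂ) = (starRingEnd ℂ) ⟪G b, a⟫ := (inner_conj_symm _ _).symm
    rw [hGinner, h1, hGinner, ← inner_conj_symm]
  set m := Module.finrank ℂ W with hm
  set b := hGsym.eigenvectorBasis rfl with hb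
  have horth := b.orthonormal
  refine ⟨m, fun i => (b i : X), ?_, ?_, ?_⟩
  · constructor
    · intro i
      have h1 : ‖b i‖ = 1 := horth.1 i
      rwa [show ‖((b i : W) : X)‖ = ‖b i‖ from rfl]
    · intro i j hij
      have h2 : (⟪b i, b j⟫ : ℂ) = 0 := horth.2 hij
      rwa [Submodule.coe_inner] at h2
  · intro i j hij
    have h1 : (⟪F ((b i : W) : X), F ((b j : W) : X)⟫ : ℂ) = ⟪G (b i), b j⟫ := (hGinner _ _).symm
    have h2 : (⟪b i, b j⟫ : ℂ) = 0 := horth.2 hij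
    rw [h1, hGsym.apply_eigenvectorBasis, inner_smul_left, h2, mul_zero]
  · intro x
    have hx : x - (W.orthogonalProjectionOnto x : X) ∈ Wᗮ := W.sub_starProjection_mem_orthogonal x
    have hWW : Wᗮ = K := Submodule.orthogonal_orthogonal K
    have hker : F (x - (W.orthogonalProjectionOnto x : X)) = 0 := by
      have hmem : x - (W.orthogonalProjectionOnto x : X) ∈ K := hWW.le hx
      simpa [hKdef] using hmem
    have hFx : F x = F ((W.orthogonalProjectionOnto x : W) : X) := by
      have h5 := map_sub F x ((W.orthogonalProjectionOnto x : W) : X)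
      rw [hker] at h5
      linear_combination (norm := module) -h5
    rw [hFx]
    have hrepr : (W.orthogonalProjectionOnto x : W) = ∑ i, (⟪(b i : X), x⟫ : ℂ) • b i := by
      rw [← b.sum_repr' (W.orthogonalProjectionOnto x)]
      refine Finset.sum_congr rfl fun i _ => ?_
      congr 1
      exact Submodule.inner_orthogonalProjectionOnto_eq_of_mem_left (K := W) (b i) x
    rw [hrepr]
    push_cast
    rw [map_sum]
    refine Finset.sum_congr rfl fun i _ => ?_
    rw [map_smul]

lemma exists_svd (F : X →L[ℂ] X) (hF : FiniteDimensional ℂ (LinearMap.range (F : X →ₗ[ℂ] X))) :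
    ∃ (m' : ℕ) (s : Fin m' → ℝ) (u v : Fin m' → X),
      Orthonormal ℂ u ∧ Orthonormal ℂ v ∧ (∀ j, 0 < s j) ∧ Antitone s ∧
      (∀ x, F x = ∑ j, (((s j : ℂ)) * ⟪u j, x⟫) • v j) := by
  classical
  obtain ⟨m, w, hw, hFw, hrec⟩ := svd_raw F hF
  set f : Fin m → ℝ := fun i => ‖F (w i)‖ with hf
  set J : Finset (Fin m) := Finset.univ.filter (fun i => f i ≠ 0) with hJ
  set m' := J.card with hm'
  set E := J.orderIsoOfFin rfl with hE
  set π := Tuple.sort (fun k : Fin m' => f (E k : Fin m)) with hπ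
  have hmono : Monotone ((fun k : Fin m' => f (E k : Fin m)) ∘ π) :=
    Tuple.monotone_sort _
  set ι : Fin m' → Fin m := fun j => (E (π j.rev) : Fin m) with hι
  have hιJ : ∀ j, ι j ∈ J := fun j => (E (π j.rev)).2
  have hιinj : Function.Injective ι := by
    intro a b hab
    have h1 : E (π a.rev) = E (π b.rev) := Subtype.ext hab
    have h2 : π a.rev = π b.rev := E.injective h1
    have h3 : a.rev = b.rev := π.injective h2
    exact Fin.rev_injective h3
  set s : Fin m' → ℝ := fun j => f (ι j) with hs
  have hspos : ∀ j, 0 < s j := by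
    intro j
    have := hιJ j
    rw [hJ, Finset.mem_filter] at this
    exact lt_of_le_of_ne (norm_nonneg _) (Ne.symm this.2)
  have hanti : Antitone s := by
    intro a b hab
    have : b.rev ≤ a.rev := Fin.rev_le_rev.mpr hab
    exact hmono this
  set u : Fin m' → X := fun j => w (ι j) with hu
  set v : Fin m' → X := fun j => ((s j : ℂ))⁻¹ • F (w (ι j)) with hv
  refine ⟨m', s, u, v, hw.comp ι hιinj, ?_, hspos, hanti, ?_⟩
  · constructor
    · intro j
      show ‖((s j : ℂ))⁻¹ • F (w (ι j))‖ = 1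
      rw [norm_smul, norm_inv, Complex.norm_real, Real.norm_eq_abs, abs_of_pos (hspos j),
        show ‖F (w (ι j))‖ = s j from rfl]
      exact inv_mul_cancel₀ (hspos j).ne'
    · intro i j hij
      have hne : ι i ≠ ι j := fun h => hij (hιinj h)
      show (⟪((s i : ℂ))⁻¹ • F (w (ι i)), ((s j : ℂ))⁻¹ • F (w (ι j))⟫ : ℂ) = 0
      rw [inner_smul_left, inner_smul_right, hFw _ _ hne]
      simp
  · intro x
    rw [hrec x]
    -- terms outside J vanish
    have hzero : ∀ i ∈ Finset.univ \ J, (⟪w i, x⟫ : ℂ) • F (w i) = 0 := by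
      intro i hi
      rw [Finset.mem_sdiff, hJ, Finset.mem_filter] at hi
      have : f i = 0 := by
        by_contra hne
        exact hi.2 ⟨Finset.mem_univ i, hne⟩
      have : F (w i) = 0 := norm_eq_zero.mp this
      rw [this, smul_zero]
    have h1 : ∑ i, (⟪w i, x⟫ : ℂ) • F (w i) = ∑ i ∈ J, (⟪w i, x⟫ : ℂ) • F (w i) :=
      (Finset.sum_subset J.subset_univ (fun i _ hni => hzero i (Finset.mem_sdiff.mpr ⟨Finset.mem_univ i, hni⟩))).symm
    rw [h1]
    have himg : Finset.univ.image ι = J := by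
      apply Finset.eq_of_subset_of_card_le
      · intro i hi
        obtain ⟨j, _, rfl⟩ := Finset.mem_image.mp hi
        exact hιJ j
      · rw [Finset.card_image_of_injective _ hιinj]
        simp [hm']
    have h2 : ∑ i ∈ J, (⟪w i, x⟫ : ℂ) • F (w i) = ∑ j, (⟪w (ι j), x⟫ : ℂ) • F (w (ι j)) := by
      rw [← himg, Finset.sum_image (fun a _ b _ h => hιinj h)]
    rw [h2]
    refine Finset.sum_congr rfl fun j _ => ?_
    show (⟪w (ι j), x⟫ : ℂ) • F (w (ι j)) = ((s j : ℂ) * ⟪u j, x⟫) • (((s j : ℂ))⁻¹ • F (w (ι j)))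
    rw [smul_smul]
    congr 1
    have hsne : (s j : ℂ) ≠ 0 := by
      exact_mod_cast (hspos j).ne'
    field_simp [hu]
    rfl

lemma norm_sq_orthonormal_sum {ι : Type*} [Fintype ι] {v : ι → X} (hv : Orthonormal ℂ v)
    (c : ι → ℂ) : ‖∑ i, c i • v i‖ ^ 2 = ∑ i, ‖c i‖ ^ 2 := by
  have h := hv.inner_sum c c Finset.univ
  have h2 : (⟪∑ i, c i • v i, ∑ i, c i • v i⟫ : ℂ) = ((‖∑ i, c i • v i‖ : ℝ) : ℂ) ^ 2 :=
    inner_self_eq_norm_sq_to_K _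
  rw [h] at h2
  have h3 : ∀ i : ι, (starRingEnd ℂ) (c i) * c i = ((‖c i‖ ^ 2 : ℝ) : ℂ) := by
    intro i
    rw [mul_comm, Complex.mul_conj]
    norm_cast
    rw [Complex.sq_norm]
  have h4 : (((∑ i, ‖c i‖ ^ 2 : ℝ)) : ℂ) = ((‖∑ i, c i • v i‖ : ℝ) : ℂ) ^ 2 := by
    rw [← h2]
    rw [Complex.ofReal_sum]
    exact Finset.sum_congr rfl (fun i _ => (h3 i).symm)
  exact_mod_cast h4.symm

lemma sv_lower (F : X →L[ℂ] X) {m : ℕ} (s : Fin m → ℝ) (u v : Fin m → X)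
    (hu : Orthonormal ℂ u) (hv : Orthonormal ℂ v) (hpos : ∀ j, 0 < s j) (hanti : Antitone s)
    (hrec : ∀ x, F x = ∑ i, (((s i : ℂ)) * ⟪u i, x⟫) • v i) (j : Fin m) :
    s j ≤ sv F (j : ℕ) := by
  classical
  haveI : Nonempty {G : X →L[ℂ] X // Module.rank ℂ (LinearMap.range ((G : X →L[ℂ] X) : X →ₗ[ℂ] X)) ≤ (j : ℕ)} :=
    ⟨⟨0, by simp⟩⟩
  refine le_ciInf fun ⟨G, hG⟩ => ?_
  set ii : Fin ((j : ℕ) + 1) → Fin m := fun k => ⟨(k : ℕ), lt_of_le_of_lt (Nat.lt_succ_iff.mp k.2) j.2⟩ with hii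
  have hiiinj : Function.Injective ii := by
    intro a b hab
    have h := congrArg Fin.val hab
    simp only [hii] at h
    exact Fin.ext h
  set uu : Fin ((j : ℕ) + 1) → X := u ∘ ii with huu
  have huuon : Orthonormal ℂ uu := hu.comp ii hiiinj
  set S : Submodule ℂ X := Submodule.span ℂ (Set.range uu) with hS
  haveI hSfd : FiniteDimensional ℂ S := FiniteDimensional.span_of_finite ℂ (Set.finite_range uu)
  have hSrank : Module.finrank ℂ S = (j : ℕ) + 1 :=
    (finrank_span_eq_card huuon.linearIndependent).trans (by simp)
  have hGfd : FiniteDimensional ℂ (LinearMap.range ((G : X →L[ℂ] X) : X →ₗ[ℂ] X)) := by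
    have : Module.rank ℂ (LinearMap.range ((G : X →L[ℂ] X) : X →ₗ[ℂ] X)) < Cardinal.aleph0 :=
      lt_of_le_of_lt hG (Cardinal.nat_lt_aleph0 _)
    exact Module.rank_lt_aleph0_iff.mp this
  have hGrank : Module.finrank ℂ (LinearMap.range ((G : X →L[ℂ] X) : X →ₗ[ℂ] X)) ≤ (j : ℕ) :=
    Module.finrank_le_of_rank_le hG
  obtain ⟨x, hxS, hxne, hGx⟩ : ∃ x : X, x ∈ S ∧ x ≠ 0 ∧ G x = 0 := by
    set φ : S →ₗ[ℂ] LinearMap.range ((G : X →L[ℂ] X) : X →ₗ[ℂ] X) :=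
      ((G : X →L[ℂ] X) : X →ₗ[ℂ] X).rangeRestrict.comp S.subtype with hφ
    by_cases hinj : Function.Injective φ
    · exfalso
      have := LinearMap.finrank_le_finrank_of_injective hinj
      omega
    · rw [Function.not_injective_iff] at hinj
      obtain ⟨a, b, hab, habne⟩ := hinj
      refine ⟨(a : X) - (b : X), S.sub_mem a.2 b.2, ?_, ?_⟩
      · intro h
        exact habne (Subtype.ext (sub_eq_zero.mp h))
      · have : G (a : X) = G (b : X) := congrArg Subtype.val hab
        rw [map_sub, this, sub_self]
  obtain ⟨c, hc⟩ := (Submodule.mem_span_range_iff_exists_fun ℂ).mp hxS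
  have hxnorm : ‖x‖ ^ 2 = ∑ k, ‖c k‖ ^ 2 := by
    rw [← hc]; exact norm_sq_orthonormal_sum huuon c
  set d : Fin m → ℂ := fun i => (s i : ℂ) * ⟪u i, x⟫ with hd
  have hFx2 : ‖F x‖ ^ 2 = ∑ i, ‖d i‖ ^ 2 := by
    rw [hrec x]; exact norm_sq_orthonormal_sum hv d
  -- inner products
  have hinner_ii : ∀ k, (⟪u (ii k), x⟫ : ℂ) = c k := by
    intro k
    rw [← hc]
    exact huuon.inner_right_fintype c k
  -- lower bound for ‖F x‖²
  have hsum_ge : (s j) ^ 2 * ‖x‖ ^ 2 ≤ ‖F x‖ ^ 2 := by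
    rw [hFx2, hxnorm, Finset.mul_sum]
    have himg : ∀ k, ‖d (ii k)‖ ^ 2 = (s (ii k)) ^ 2 * ‖c k‖ ^ 2 := by
      intro k
      rw [hd]
      simp only [norm_mul, mul_pow, hinner_ii k]
      congr 1
      rw [Complex.norm_real, Real.norm_eq_abs, abs_of_pos (hpos _)]
    calc ∑ k, s j ^ 2 * ‖c k‖ ^ 2
        ≤ ∑ k, ‖d (ii k)‖ ^ 2 := by
          refine Finset.sum_le_sum fun k _ => ?_
          rw [himg k]
          have h1 : s j ≤ s (ii k) := hanti (by
            show ii k ≤ j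
            exact Fin.mk_le_of_le_val (Nat.lt_succ_iff.mp k.2))
          have h2 : 0 ≤ s j := (hpos j).le
          exact mul_le_mul_of_nonneg_right (pow_le_pow_left₀ h2 h1 2) (sq_nonneg _)
      _ = ∑ i ∈ Finset.univ.image ii, ‖d i‖ ^ 2 := by
          rw [Finset.sum_image (fun a _ b _ h => hiiinj h)]
      _ ≤ ∑ i, ‖d i‖ ^ 2 := by
          refine Finset.sum_le_sum_of_subset_of_nonneg (Finset.subset_univ _) ?_
          intro i _ _
          positivity
  have hxpos : 0 < ‖x‖ := norm_pos_iff.mpr hxne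
  have hFxge : s j * ‖x‖ ≤ ‖F x‖ := by
    have h1 : (s j * ‖x‖) ^ 2 ≤ ‖F x‖ ^ 2 := by rw [mul_pow]; exact hsum_ge
    have h2 : 0 ≤ s j * ‖x‖ := mul_nonneg (hpos j).le (norm_nonneg _)
    nlinarith [norm_nonneg (F x)]
  have hbound : ‖F x‖ ≤ ‖F - G‖ * ‖x‖ := by
    have := (F - G).le_opNorm x
    simpa [ContinuousLinearMap.sub_apply, hGx] using this
  have := le_trans hFxge hbound
  exact le_of_mul_le_mul_right (by linarith) hxpos

lemma weight_sum_le (T C : ℕ → ℝ) (hT0 : ∀ k, 0 ≤ T k) (hTanti : Antitone T)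
    (hC0 : ∀ k, 0 ≤ C k) (hC1 : ∀ k, C k ≤ 1) (N n : ℕ)
    (hCn : ∑ k ∈ Finset.range N, C k ≤ n) :
    ∑ k ∈ Finset.range N, T k * C k ≤ ∑ k ∈ Finset.range n, T k := by
  rcases le_or_gt N n with hNn | hnN
  · calc ∑ k ∈ Finset.range N, T k * C k ≤ ∑ k ∈ Finset.range N, T k := by
          refine Finset.sum_le_sum fun k _ => ?_
          calc T k * C k ≤ T k * 1 := mul_le_mul_of_nonneg_left (hC1 k) (hT0 k)
            _ = T k := mul_one _
      _ ≤ ∑ k ∈ Finset.range n, T k :=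
          Finset.sum_le_sum_of_subset_of_nonneg (Finset.range_subset_range.mpr hNn)
            (fun k _ _ => hT0 k)
  · have hsplit : ∑ k ∈ Finset.range N, T k * C k
        = ∑ k ∈ Finset.range n, T k * C k + ∑ k ∈ Finset.Ico n N, T k * C k := by
      rw [← Finset.sum_range_add_sum_Ico _ hnN.le]
    have htail : ∑ k ∈ Finset.Ico n N, T k * C k ≤ T n * ∑ k ∈ Finset.Ico n N, C k := by
      rw [Finset.mul_sum]
      refine Finset.sum_le_sum fun k hk => ?_
      have : T k ≤ T n := hTanti (Finset.mem_Ico.mp hk).1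
      exact mul_le_mul_of_nonneg_right this (hC0 k)
    have hIco : ∑ k ∈ Finset.Ico n N, C k ≤ (n : ℝ) - ∑ k ∈ Finset.range n, C k := by
      have := Finset.sum_range_add_sum_Ico C hnN.le
      linarith
    have hTn0 : 0 ≤ T n := hT0 n
    calc ∑ k ∈ Finset.range N, T k * C k
        ≤ ∑ k ∈ Finset.range n, T k * C k + T n * ((n : ℝ) - ∑ k ∈ Finset.range n, C k) := by
          rw [hsplit]
          have h2 : T n * ∑ k ∈ Finset.Ico n N, C k ≤ T n * ((n:ℝ) - ∑ k ∈ Finset.range n, C k) :=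
            mul_le_mul_of_nonneg_left hIco hTn0
          linarith
      _ = ∑ k ∈ Finset.range n, (T k * C k + T n * (1 - C k)) := by
          rw [Finset.sum_add_distrib]
          congr 1
          rw [← Finset.mul_sum, Finset.sum_sub_distrib]
          simp [mul_sub]
      _ ≤ ∑ k ∈ Finset.range n, T k := by
          refine Finset.sum_le_sum fun k hk => ?_
          have hk' : k ≤ n := (Finset.mem_range.mp hk).le
          have h1 : T n ≤ T k := hTanti hk'
          have h2 : 0 ≤ 1 - C k := by linarith [hC1 k]
          nlinarith [hC0 k, hT0 k]

lemma cs_bessel_le_one {e : ℕ → X} (he : Orthonormal ℂ e) {a b : X}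
    (ha : ‖a‖ = 1) (hb : ‖b‖ = 1) (n : ℕ) :
    ∑ k ∈ Finset.range n, ‖(⟪a, e k⟫ : ℂ)‖ * ‖(⟪e k, b⟫ : ℂ)‖ ≤ 1 := by
  have hcs := Finset.sum_mul_sq_le_sq_mul_sq (Finset.range n)
    (fun k => ‖(⟪a, e k⟫ : ℂ)‖) (fun k => ‖(⟪e k, b⟫ : ℂ)‖)
  have h1 : ∑ k ∈ Finset.range n, ‖(⟪a, e k⟫ : ℂ)‖ ^ 2 ≤ 1 := by
    have := he.sum_inner_products_le (s := Finset.range n) a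
    rw [ha] at this
    calc ∑ k ∈ Finset.range n, ‖(⟪a, e k⟫ : ℂ)‖ ^ 2
        = ∑ k ∈ Finset.range n, ‖(⟪e k, a⟫ : ℂ)‖ ^ 2 := by
          refine Finset.sum_congr rfl fun k _ => ?_
          rw [norm_inner_symm]
      _ ≤ 1 := by simpa using this
  have h2 : ∑ k ∈ Finset.range n, ‖(⟪e k, b⟫ : ℂ)‖ ^ 2 ≤ 1 := by
    have := he.sum_inner_products_le (s := Finset.range n) b
    rw [hb] at this
    simpa using this
  have hnn : 0 ≤ ∑ k ∈ Finset.range n, ‖(⟪a, e k⟫ : ℂ)‖ * ‖(⟪e k, b⟫ : ℂ)‖ :=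
    Finset.sum_nonneg fun k _ => mul_nonneg (norm_nonneg _) (norm_nonneg _)
  nlinarith [Finset.sum_nonneg (fun k (_ : k ∈ Finset.range n) => sq_nonneg ‖(⟪a, e k⟫ : ℂ)‖),
    Finset.sum_nonneg (fun k (_ : k ∈ Finset.range n) => sq_nonneg ‖(⟪e k, b⟫ : ℂ)‖)]

lemma kyfan (F : X →L[ℂ] X) {m : ℕ} (s : Fin m → ℝ) (u v : Fin m → X)
    (hu : Orthonormal ℂ u) (hv : Orthonormal ℂ v) (hpos : ∀ j, 0 < s j)
    (hrec : ∀ x, F x = ∑ i, (((s i : ℂ)) * ⟪u i, x⟫) • v i)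
    (e : ℕ → X) (he : Orthonormal ℂ e) (n : ℕ) :
    ∃ c : Fin m → ℝ, (∀ j, 0 ≤ c j) ∧ (∀ j, c j ≤ 1) ∧ (∑ j, c j ≤ (n : ℝ)) ∧
      ∑ k ∈ Finset.range n, ‖(⟪e k, F (e k)⟫ : ℂ)‖ ≤ ∑ j, s j * c j := by
  classical
  set c : Fin m → ℝ :=
    fun j => ∑ k ∈ Finset.range n, ‖(⟪u j, e k⟫ : ℂ)‖ * ‖(⟪e k, v j⟫ : ℂ)‖ with hc
  have hc0 : ∀ j, 0 ≤ c j :=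
    fun j => Finset.sum_nonneg fun k _ => mul_nonneg (norm_nonneg _) (norm_nonneg _)
  have hc1 : ∀ j, c j ≤ 1 := by
    intro j
    exact cs_bessel_le_one he (hu.1 j) (hv.1 j) n
  have hcn : ∑ j, c j ≤ (n : ℝ) := by
    rw [hc]
    rw [Finset.sum_comm]
    calc ∑ k ∈ Finset.range n, ∑ j, ‖(⟪u j, e k⟫ : ℂ)‖ * ‖(⟪e k, v j⟫ : ℂ)‖
        ≤ ∑ k ∈ Finset.range n, (1 : ℝ) := by
          refine Finset.sum_le_sum fun k _ => ?_
          -- Cauchy-Schwarz over j, Bessel w.r.t. u and v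
          have hcs := Finset.sum_mul_sq_le_sq_mul_sq (Finset.univ : Finset (Fin m))
            (fun j => ‖(⟪u j, e k⟫ : ℂ)‖) (fun j => ‖(⟪e k, v j⟫ : ℂ)‖)
          have h1 : ∑ j, ‖(⟪u j, e k⟫ : ℂ)‖ ^ 2 ≤ 1 := by
            have := hu.sum_inner_products_le (s := Finset.univ) (e k)
            have hek : ‖e k‖ = 1 := he.1 k
            rw [hek] at this
            simpa using this
          have h2 : ∑ j, ‖(⟪e k, v j⟫ : ℂ)‖ ^ 2 ≤ 1 := by
            have := hv.sum_inner_products_le (s := Finset.univ) (e k)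
            have hek : ‖e k‖ = 1 := he.1 k
            rw [hek] at this
            calc ∑ j, ‖(⟪e k, v j⟫ : ℂ)‖ ^ 2
                = ∑ j, ‖(⟪v j, e k⟫ : ℂ)‖ ^ 2 := by
                  refine Finset.sum_congr rfl fun j _ => ?_
                  rw [norm_inner_symm]
              _ ≤ 1 := by simpa using this
          have hnn : 0 ≤ ∑ j, ‖(⟪u j, e k⟫ : ℂ)‖ * ‖(⟪e k, v j⟫ : ℂ)‖ :=
            Finset.sum_nonneg fun j _ => mul_nonneg (norm_nonneg _) (norm_nonneg _)
          nlinarith [Finset.sum_nonneg (fun j (_ : j ∈ (Finset.univ : Finset (Fin m))) => sq_nonneg ‖(⟪u j, e k⟫ : ℂ)‖),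
            Finset.sum_nonneg (fun j (_ : j ∈ (Finset.univ : Finset (Fin m))) => sq_nonneg ‖(⟪e k, v j⟫ : ℂ)‖)]
      _ = (n : ℝ) := by simp
  refine ⟨c, hc0, hc1, hcn, ?_⟩
  have hterm : ∀ k, ‖(⟪e k, F (e k)⟫ : ℂ)‖
      ≤ ∑ j, s j * (‖(⟪u j, e k⟫ : ℂ)‖ * ‖(⟪e k, v j⟫ : ℂ)‖) := by
    intro k
    have hx : (⟪e k, F (e k)⟫ : ℂ)
        = ∑ j, ((s j : ℂ) * ⟪u j, e k⟫) * ⟪e k, v j⟫ := by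
      rw [hrec (e k), inner_sum]
      refine Finset.sum_congr rfl fun j _ => ?_
      rw [inner_smul_right]
    rw [hx]
    calc ‖∑ j, ((s j : ℂ) * ⟪u j, e k⟫) * ⟪e k, v j⟫‖
        ≤ ∑ j, ‖((s j : ℂ) * ⟪u j, e k⟫) * ⟪e k, v j⟫‖ :=
          norm_sum_le _ _
      _ = ∑ j, s j * (‖(⟪u j, e k⟫ : ℂ)‖ * ‖(⟪e k, v j⟫ : ℂ)‖) := by
          refine Finset.sum_congr rfl fun j _ => ?_
          rw [norm_mul, norm_mul, Complex.norm_real, Real.norm_eq_abs, abs_of_pos (hpos j)]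
          simp [mul_assoc]
  calc ∑ k ∈ Finset.range n, ‖(⟪e k, F (e k)⟫ : ℂ)‖
      ≤ ∑ k ∈ Finset.range n, ∑ j, s j * (‖(⟪u j, e k⟫ : ℂ)‖ * ‖(⟪e k, v j⟫ : ℂ)‖) :=
        Finset.sum_le_sum fun k _ => hterm k
    _ = ∑ j, s j * c j := by
        rw [Finset.sum_comm]
        refine Finset.sum_congr rfl fun j _ => ?_
        rw [hc, Finset.mul_sum]

end Aux

/-- For a compact operator `T` and any orthonormal system `(e_k)`,
`∑_{k=1}^n |⟨e_k, T e_k⟩| ≤ ∑_{k=1}^n s_k(T)` for every `n`. -/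
theorem stmt16 {X : Type u} [NormedAddCommGroup X] [InnerProductSpace ℂ X] [CompleteSpace X]
    (hX : ¬ FiniteDimensional ℂ X)
    (T : X →L[ℂ] X) (hT : IsCompactOperator T)
    (e : ℕ → X) (he : Orthonormal ℂ e) :
    ∀ n : ℕ, ∑ k ∈ Finset.range n, ‖(⟪e k, T (e k)⟫ : ℂ)‖
      ≤ ∑ k ∈ Finset.range n, sv T k := by
  intro n
  refine le_of_forall_pos_le_add fun δ hδ => ?_
  classical
  set ε : ℝ := δ / (2 * n + 1) with hεdef
  have hεpos : 0 < ε := by positivity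
  obtain ⟨F, hFfd, hFT⟩ := exists_finiteRank_approx T hT hεpos
  obtain ⟨m, s, u, v, hu, hv, hpos, hanti, hrec⟩ := exists_svd F hFfd
  obtain ⟨c, hc0, hc1, hcn, hkf⟩ := kyfan F s u v hu hv hpos hrec e he n
  -- Step A: replace T by F
  have stepA : ∑ k ∈ Finset.range n, ‖(⟪e k, T (e k)⟫ : ℂ)‖
      ≤ ∑ k ∈ Finset.range n, ‖(⟪e k, F (e k)⟫ : ℂ)‖ + n * ε := by
    have hterm : ∀ k, ‖(⟪e k, T (e k)⟫ : ℂ)‖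
        ≤ ‖(⟪e k, F (e k)⟫ : ℂ)‖ + ε := by
      intro k
      have hsub : (⟪e k, T (e k)⟫ : ℂ) - ⟪e k, F (e k)⟫ = ⟪e k, (T - F) (e k)⟫ := by
        rw [ContinuousLinearMap.sub_apply, inner_sub_right]
      have h1 : ‖(⟪e k, T (e k)⟫ : ℂ) - ⟪e k, F (e k)⟫‖ ≤ ε := by
        rw [hsub]
        calc ‖(⟪e k, (T - F) (e k)⟫ : ℂ)‖ ≤ ‖e k‖ * ‖(T - F) (e k)‖ := by
              exact norm_inner_le_norm (𝕜 := ℂ) (e k) ((T - F) (e k))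
          _ ≤ ‖e k‖ * (‖T - F‖ * ‖e k‖) :=
              mul_le_mul_of_nonneg_left ((T - F).le_opNorm (e k)) (norm_nonneg _)
          _ ≤ ε := by rw [he.1 k]; simpa using hFT
      have h3 := norm_add_le ((⟪e k, T (e k)⟫ : ℂ) - ⟪e k, F (e k)⟫) (⟪e k, F (e k)⟫ : ℂ)
      rw [sub_add_cancel] at h3
      linarith
    calc ∑ k ∈ Finset.range n, ‖(⟪e k, T (e k)⟫ : ℂ)‖
        ≤ ∑ k ∈ Finset.range n, (‖(⟪e k, F (e k)⟫ : ℂ)‖ + ε) :=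
          Finset.sum_le_sum fun k _ => hterm k
      _ = ∑ k ∈ Finset.range n, ‖(⟪e k, F (e k)⟫ : ℂ)‖ + n * ε := by
          rw [Finset.sum_add_distrib]
          simp [mul_comm]
  -- Step B: padded sequences and the weight lemma
  set Tp : ℕ → ℝ := fun k => if h : k < m then s ⟨k, h⟩ else 0 with hTp
  set Cp : ℕ → ℝ := fun k => if h : k < m then c ⟨k, h⟩ else 0 with hCp
  have hTp0 : ∀ k, 0 ≤ Tp k := by
    intro k; rw [hTp]; dsimp only
    split_ifs with h
    · exact (hpos _).le
    · exact le_rfl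
  have hTpanti : Antitone Tp := by
    intro a b hab
    rw [hTp]; dsimp only
    split_ifs with hb ha ha
    · exact hanti (by exact_mod_cast hab)
    · exact absurd (lt_of_le_of_lt hab hb) ha
    · exact (hpos _).le
    · exact le_rfl
  have hCp0 : ∀ k, 0 ≤ Cp k := by
    intro k; rw [hCp]; dsimp only
    split_ifs with h
    · exact hc0 _
    · exact le_rfl
  have hCp1 : ∀ k, Cp k ≤ 1 := by
    intro k; rw [hCp]; dsimp only
    split_ifs with h
    · exact hc1 _
    · norm_num
  set N : ℕ := max m n with hN
  have hsum_fin : ∀ f : Fin m → ℝ,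
      ∑ k ∈ Finset.range N, (fun k => if h : k < m then f ⟨k, h⟩ else 0) k = ∑ j, f j := by
    intro f
    rw [← Finset.sum_subset (Finset.range_subset_range.mpr (le_max_left m n))
      (fun k _ hk => dif_neg (fun hcon => hk (Finset.mem_range.mpr hcon)))]
    rw [← Fin.sum_univ_eq_sum_range (fun k => if h : k < m then f ⟨k, h⟩ else 0) m]
    refine Finset.sum_congr rfl fun j _ => ?_
    rw [dif_pos j.isLt]
  have hCpN : ∑ k ∈ Finset.range N, Cp k ≤ (n : ℝ) := by
    rw [hCp, hsum_fin c]; exact hcn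
  have hweight := weight_sum_le Tp Cp hTp0 hTpanti hCp0 hCp1 N n hCpN
  have hsc : ∑ j, s j * c j = ∑ k ∈ Finset.range N, Tp k * Cp k := by
    rw [← hsum_fin (fun j => s j * c j)]
    refine Finset.sum_congr rfl fun k _ => ?_
    rw [hTp, hCp]
    dsimp only
    split_ifs with h
    · rfl
    · rw [mul_zero]
  have hTpbound : ∑ k ∈ Finset.range n, Tp k ≤ ∑ k ∈ Finset.range n, (sv T k + ε) := by
    refine Finset.sum_le_sum fun k _ => ?_
    rw [hTp]; dsimp only
    split_ifs with h
    · have h1 : s ⟨k, h⟩ ≤ sv F k := sv_lower F s u v hu hv hpos hanti hrec ⟨k, h⟩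
      have h2 : sv F k ≤ sv T k + ‖F - T‖ := sv_le_add' T F k
      have h3 : ‖F - T‖ ≤ ε := by rwa [norm_sub_rev]
      linarith
    · have := sv_nonneg' T k
      linarith
  have hδε : 2 * (n : ℝ) * ε ≤ δ := by
    have h1 : ε * (2 * (n : ℝ) + 1) = δ := by
      rw [hεdef]; field_simp
    nlinarith
  have hfinal : ∑ k ∈ Finset.range n, (sv T k + ε) = ∑ k ∈ Finset.range n, sv T k + n * ε := by
    rw [Finset.sum_add_distrib]; simp [mul_comm]
  calc ∑ k ∈ Finset.range n, ‖(⟪e k, T (e k)⟫ : ℂ)‖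
      ≤ ∑ k ∈ Finset.range n, ‖(⟪e k, F (e k)⟫ : ℂ)‖ + n * ε := stepA
    _ ≤ (∑ j, s j * c j) + n * ε := by linarith [hkf]
    _ = (∑ k ∈ Finset.range N, Tp k * Cp k) + n * ε := by rw [hsc]
    _ ≤ (∑ k ∈ Finset.range n, Tp k) + n * ε := by linarith [hweight]
    _ ≤ (∑ k ∈ Finset.range n, (sv T k + ε)) + n * ε := by linarith [hTpbound]
    _ = ∑ k ∈ Finset.range n, sv T k + (n * ε + n * ε) := by rw [hfinal]; ring
    _ ≤ ∑ k ∈ Finset.range n, sv T k + δ := by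
        have : (n : ℝ) * ε + n * ε = 2 * n * ε := by ring
        linarith

end
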